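/- For any y = (y₁,…,y_K) and any point ξ in the convex hull constraint set, replacing a center y_k by the weighted centroid of the points assigned to it (with r = 2) does not increase F: F(y₁,…,c_k,…,y_K) ≤ F(y₁,…,y_k,…,y_K), where c_k = (∑_{i ∈ S_k} p_i ξ_i)/(∑_{i ∈ S_k} p_i) and S_k = {i : k = argmin_j ‖ξ_i − y_j‖} is nonempty. -/

import Mathlib

open Finset

open scoped RealInnerProductSpace

theorem stmt_16 {n I K : ℕ} (hK : 0 < K)
    (ξ : Fin I → EuclideanSpace ℝ (Fin n))
    (y : Fin K → EuclideanSpace ℝ (Fin n))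
    (p : Fin I → ℝ) (hp : ∀ i, 0 < p i)
    (kmin : Fin I → Fin K)
    -- fixed tie-breaking assignment to the nearest center
    (hkmin : ∀ i j, ‖ξ i - y (kmin i)‖ ≤ ‖ξ i - y j‖)
    (k : Fin K)
    (S : Finset (Fin I)) (hS : S = univ.filter fun i => kmin i = k)
    (hSne : S.Nonempty)
    (c : EuclideanSpace ℝ (Fin n))
    (hc : c = (∑ i ∈ S, p i)⁻¹ • ∑ i ∈ S, p i • ξ i) :
    ∑ i, p i * (univ.inf' (univ_nonempty_iff.mpr ⟨⟨0, hK⟩⟩)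
        fun j => ‖ξ i - Function.update y k c j‖ ^ 2) ≤
    ∑ i, p i * (univ.inf' (univ_nonempty_iff.mpr ⟨⟨0, hK⟩⟩)
        fun j => ‖ξ i - y j‖ ^ 2) := by
  have hne := univ_nonempty_iff.mpr (⟨⟨0, hK⟩⟩ : Nonempty (Fin K))
  have hW : 0 < ∑ i ∈ S, p i := Finset.sum_pos (fun i _ => hp i) hSne
  have hmemS : ∀ i, i ∈ S ↔ kmin i = k := by
    intro i; rw [hS]; simp
  -- the weighted centroid annihilates the first moment
  have hzero : ∑ i ∈ S, p i • (ξ i - c) = (0 : EuclideanSpace ℝ (Fin n)) := by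
    have hc' : (∑ i ∈ S, p i) • c = ∑ i ∈ S, p i • ξ i := by
      rw [hc, smul_smul, mul_inv_cancel₀ hW.ne', one_smul]
    simp only [smul_sub, Finset.sum_sub_distrib, ← Finset.sum_smul, hc', sub_self]
  -- centroid minimizes weighted sum of squared distances
  have hcent : ∀ z : EuclideanSpace ℝ (Fin n),
      ∑ i ∈ S, p i * ‖ξ i - c‖ ^ 2 ≤ ∑ i ∈ S, p i * ‖ξ i - z‖ ^ 2 := by
    intro z
    have h1 : ∑ i ∈ S, p i * ‖ξ i - z‖ ^ 2
        = ∑ i ∈ S, (p i * ‖ξ i - c‖ ^ 2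
            + (2 * ⟪p i • (ξ i - c), c - z⟫ + p i * ‖c - z‖ ^ 2)) := by
      apply Finset.sum_congr rfl
      intro i _
      have : ξ i - z = (ξ i - c) + (c - z) := by abel
      rw [this, norm_add_sq_real, real_inner_smul_left]
      ring
    rw [h1, Finset.sum_add_distrib, Finset.sum_add_distrib, ← Finset.mul_sum,
      ← sum_inner, hzero, inner_zero_left, mul_zero, zero_add, ← Finset.sum_mul]
    nlinarith [sq_nonneg ‖c - z‖, hW]
  -- old inf' evaluates at kmin i
  have hold : ∀ i, (univ.inf' hne fun j => ‖ξ i - y j‖ ^ 2)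
      = ‖ξ i - y (kmin i)‖ ^ 2 := by
    intro i
    apply le_antisymm (Finset.inf'_le _ (mem_univ _))
    apply Finset.le_inf'
    intro j _
    exact pow_le_pow_left₀ (norm_nonneg _) (hkmin i j) 2
  rw [← Finset.sum_add_sum_compl S, ← Finset.sum_add_sum_compl S
    (fun i => p i * (univ.inf' hne fun j => ‖ξ i - y j‖ ^ 2))]
  apply add_le_add
  · calc ∑ i ∈ S, p i * (univ.inf' hne fun j => ‖ξ i - Function.update y k c j‖ ^ 2)
        ≤ ∑ i ∈ S, p i * ‖ξ i - c‖ ^ 2 := by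
          apply Finset.sum_le_sum
          intro i hi
          apply mul_le_mul_of_nonneg_left _ (hp i).le
          have := Finset.inf'_le (fun j => ‖ξ i - Function.update y k c j‖ ^ 2)
            (mem_univ k)
          simp only [Function.update_self] at this; exact this
      _ ≤ ∑ i ∈ S, p i * ‖ξ i - y k‖ ^ 2 := hcent (y k)
      _ = ∑ i ∈ S, p i * (univ.inf' hne fun j => ‖ξ i - y j‖ ^ 2) := by
          apply Finset.sum_congr rfl
          intro i hi
          rw [hold i, (hmemS i).mp hi]
  · apply Finset.sum_le_sum
    intro i hi
    apply mul_le_mul_of_nonneg_left _ (hp i).le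
    rw [hold i]
    have hik : kmin i ≠ k := by
      intro h; exact (Finset.mem_compl.mp hi) ((hmemS i).mpr h)
    have := Finset.inf'_le (fun j => ‖ξ i - Function.update y k c j‖ ^ 2)
      (mem_univ (kmin i))
    simp only [Function.update_of_ne hik] at this; exact this
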